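/- Let n, q, r be positive integers with q < n, let A₀ be an invertible real n×n matrix, B a real n×q matrix of full column rank, Σ = A₀⁻¹BBᵀ(A₀⁻¹)ᵀ, and let R : ℝ^{n×n} × ℝ^{n×q} → ℝ^r be a linear map (the researcher-imposed affine restrictions). If the linear map (H, K) ↦ ( −A₀⁻¹HΣ − ΣHᵀ(A₀⁻¹)ᵀ + A₀⁻¹(KBᵀ + BKᵀ)(A₀⁻¹)ᵀ , R(H, K) ) is injective, then there is a neighborhood U of (A₀, B) in ℝ^{n×n} × ℝ^{n×q} such that every pair (Ã₀, B̃) ∈ U with Ã₀ invertible, Ã₀⁻¹B̃B̃ᵀ(Ã₀⁻¹)ᵀ = Σ, and R(Ã₀, B̃) = R(A₀, B) satisfies (Ã₀, B̃) = (A₀, B). -/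

import Mathlib

open Matrix

section Aux

attribute [local instance] Matrix.normedAddCommGroup Matrix.normedSpace

theorem stmt_4_aux (n q r : ℕ)
    (A₀ : Matrix (Fin n) (Fin n) ℝ) (hA₀ : IsUnit A₀.det)
    (B : Matrix (Fin n) (Fin q) ℝ)
    (Sig : Matrix (Fin n) (Fin n) ℝ) (hSig : Sig = A₀⁻¹ * B * Bᵀ * (A₀⁻¹)ᵀ)
    (R : (Matrix (Fin n) (Fin n) ℝ × Matrix (Fin n) (Fin q) ℝ) →ₗ[ℝ] (Fin r → ℝ))
    (J : (Matrix (Fin n) (Fin n) ℝ × Matrix (Fin n) (Fin q) ℝ) →ₗ[ℝ]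
      (Matrix (Fin n) (Fin n) ℝ × (Fin r → ℝ)))
    (hJ : ∀ H K, J (H, K) =
      (-(A₀⁻¹ * H * Sig) - Sig * Hᵀ * (A₀⁻¹)ᵀ + A₀⁻¹ * (K * Bᵀ + B * Kᵀ) * (A₀⁻¹)ᵀ,
        R (H, K)))
    (hinj : Function.Injective J) :
    ∃ U ∈ nhds (A₀, B),
      ∀ p ∈ U, IsUnit (Prod.fst p).det →
        (Prod.fst p)⁻¹ * (Prod.snd p) * (Prod.snd p)ᵀ * ((Prod.fst p)⁻¹)ᵀ = Sig →
        R p = R (A₀, B) → p = (A₀, B) := by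
  classical
  -- inverse facts
  have hinv1 : A₀⁻¹ * A₀ = 1 := Matrix.nonsing_inv_mul A₀ hA₀
  have hinv2 : A₀ᵀ * (A₀⁻¹)ᵀ = 1 := by
    rw [← Matrix.transpose_mul, Matrix.nonsing_inv_mul A₀ hA₀, Matrix.transpose_one]
  -- the bilinear map
  set b : (Matrix (Fin n) (Fin n) ℝ × Matrix (Fin n) (Fin q) ℝ) →ₗ[ℝ]
      (Matrix (Fin n) (Fin n) ℝ × Matrix (Fin n) (Fin q) ℝ) →ₗ[ℝ] Matrix (Fin n) (Fin n) ℝ :=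
    LinearMap.mk₂ ℝ (fun p q => p.1 * Sig * q.1ᵀ - p.2 * q.2ᵀ)
      (by rintro ⟨H, K⟩ ⟨H', K'⟩ ⟨L, N⟩
          simp [Matrix.add_mul, Matrix.mul_add]; abel)
      (by rintro c ⟨H, K⟩ ⟨L, N⟩
          simp [Matrix.smul_mul, Matrix.mul_smul, smul_sub])
      (by rintro ⟨H, K⟩ ⟨L, N⟩ ⟨L', N'⟩
          simp [Matrix.mul_add, transpose_add]; abel)
      (by rintro c ⟨H, K⟩ ⟨L, N⟩
          simp [Matrix.smul_mul, Matrix.mul_smul, transpose_smul, smul_sub])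
    with hbdef
  set b' : (Matrix (Fin n) (Fin n) ℝ × Matrix (Fin n) (Fin q) ℝ) →ₗ[ℝ]
      ((Matrix (Fin n) (Fin n) ℝ × Matrix (Fin n) (Fin q) ℝ) →L[ℝ] Matrix (Fin n) (Fin n) ℝ) :=
    (LinearMap.toContinuousLinearMap).toLinearMap.comp b with hb'def
  set bL := LinearMap.toContinuousLinearMap b' with hbLdef
  have hbLapp : ∀ p q : Matrix (Fin n) (Fin n) ℝ × Matrix (Fin n) (Fin q) ℝ,
      bL p q = p.1 * Sig * q.1ᵀ - p.2 * q.2ᵀ := fun p q => rfl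
  have hbb : IsBoundedBilinearMap ℝ
      (fun x : (Matrix (Fin n) (Fin n) ℝ × Matrix (Fin n) (Fin q) ℝ) ×
        (Matrix (Fin n) (Fin n) ℝ × Matrix (Fin n) (Fin q) ℝ) => bL x.1 x.2) :=
    bL.isBoundedBilinearMap
  set p₀ : Matrix (Fin n) (Fin n) ℝ × Matrix (Fin n) (Fin q) ℝ := (A₀, B) with hp₀
  set diag := (ContinuousLinearMap.id ℝ (Matrix (Fin n) (Fin n) ℝ × Matrix (Fin n) (Fin q) ℝ)).prod
    (ContinuousLinearMap.id ℝ (Matrix (Fin n) (Fin n) ℝ × Matrix (Fin n) (Fin q) ℝ)) with hdiagdef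
  have hdiag : HasStrictFDerivAt (fun x : Matrix (Fin n) (Fin n) ℝ × Matrix (Fin n) (Fin q) ℝ =>
      (x, x)) diag p₀ := diag.hasStrictFDerivAt
  have hQ0 := HasStrictFDerivAt.comp (f := fun x : Matrix (Fin n) (Fin n) ℝ × Matrix (Fin n) (Fin q) ℝ => (x, x))
      p₀ (hbb.hasStrictFDerivAt (p₀, p₀)) hdiag
  have hQ : HasStrictFDerivAt (fun x : Matrix (Fin n) (Fin n) ℝ × Matrix (Fin n) (Fin q) ℝ =>
      bL x x) ((hbb.deriv (p₀, p₀)).comp diag) p₀ := hQ0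
  set Rc := LinearMap.toContinuousLinearMap R with hRcdef
  have hRcapp : ∀ x, Rc x = R x := fun x => rfl
  set D := ((hbb.deriv (p₀, p₀)).comp diag).prod Rc with hDdef
  set G : Matrix (Fin n) (Fin n) ℝ × Matrix (Fin n) (Fin q) ℝ →
      Matrix (Fin n) (Fin n) ℝ × (Fin r → ℝ) := fun x => (bL x x, Rc x) with hGdef
  have hGder : HasStrictFDerivAt G D p₀ := HasStrictFDerivAt.prodMk hQ Rc.hasStrictFDerivAt
  -- compute D
  have hDapp : ∀ x : Matrix (Fin n) (Fin n) ℝ × Matrix (Fin n) (Fin q) ℝ,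
      D x = (A₀ * Sig * x.1ᵀ - B * x.2ᵀ + (x.1 * Sig * A₀ᵀ - x.2 * Bᵀ), R x) := by
    intro x
    have h1 : (hbb.deriv (p₀, p₀)) (x, x) = bL p₀ x + bL x p₀ := hbb.deriv_apply (p₀, p₀) (x, x)
    have : D x = ((hbb.deriv (p₀, p₀)) (x, x), R x) := rfl
    rw [this, h1, hbLapp, hbLapp]
  -- injectivity of D
  have hDinj : Function.Injective D := by
    have hker : ∀ x, D x = 0 → x = 0 := by
      rintro ⟨H, K⟩ hx
      rw [hDapp] at hx
      have h1 : A₀ * Sig * Hᵀ - B * Kᵀ + (H * Sig * A₀ᵀ - K * Bᵀ) = 0 :=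
        congrArg Prod.fst hx
      have h2 : R (H, K) = 0 := congrArg Prod.snd hx
      have hJ0 : J (H, K) = 0 := by
        rw [hJ]
        have key : -(A₀⁻¹ * H * Sig) - Sig * Hᵀ * (A₀⁻¹)ᵀ
            + A₀⁻¹ * (K * Bᵀ + B * Kᵀ) * (A₀⁻¹)ᵀ
            = -(A₀⁻¹ * ((A₀ * Sig * Hᵀ - B * Kᵀ + (H * Sig * A₀ᵀ - K * Bᵀ)) * (A₀⁻¹)ᵀ)) := by
          simp only [Matrix.mul_add, Matrix.add_mul, Matrix.mul_sub, Matrix.sub_mul,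
            Matrix.mul_assoc, Matrix.neg_mul, Matrix.mul_neg, neg_sub, neg_add, neg_neg]
          rw [show Sig * (A₀ᵀ * (A₀⁻¹)ᵀ) = Sig by rw [hinv2, Matrix.mul_one]]
          rw [show A₀⁻¹ * (A₀ * (Sig * (Hᵀ * (A₀⁻¹)ᵀ))) = Sig * (Hᵀ * (A₀⁻¹)ᵀ) by
            rw [← Matrix.mul_assoc A₀⁻¹ A₀, hinv1, Matrix.one_mul]]
          abel
        rw [key, h1]
        simp [h2]
      have := hinj (a₁ := (H, K)) (a₂ := 0) (by rw [hJ0, map_zero])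
      exact this
    intro x y hxy
    have : D (x - y) = 0 := by rw [map_sub, hxy, sub_self]
    have := hker _ this
    exact sub_eq_zero.mp this
  -- left inverse
  obtain ⟨P, hP⟩ := LinearMap.exists_leftInverse_of_injective
    (D : (Matrix (Fin n) (Fin n) ℝ × Matrix (Fin n) (Fin q) ℝ) →ₗ[ℝ] (Matrix (Fin n) (Fin n) ℝ × (Fin r → ℝ)))
    (LinearMap.ker_eq_bot.mpr hDinj)
  set Pc := LinearMap.toContinuousLinearMap P with hPcdef
  have hPD : Pc.comp D = (ContinuousLinearEquiv.refl ℝ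
      (Matrix (Fin n) (Fin n) ℝ × Matrix (Fin n) (Fin q) ℝ) :
      (Matrix (Fin n) (Fin n) ℝ × Matrix (Fin n) (Fin q) ℝ) →L[ℝ] _) := by
    refine ContinuousLinearMap.ext fun x => ?_
    have hx := LinearMap.congr_fun hP x
    exact hx
  have hGder' := Pc.hasStrictFDerivAt.comp p₀ hGder
  replace hGder' := hGder'.congr_fderiv hPD
  set Φ := HasStrictFDerivAt.toOpenPartialHomeomorph (⇑Pc ∘ G) hGder' with hΦ
  refine ⟨Φ.source, Φ.open_source.mem_nhds (HasStrictFDerivAt.mem_toOpenPartialHomeomorph_source hGder'), ?_⟩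
  rintro ⟨A₁, B₁⟩ hpU hunit hcov hres
  -- the cancellation lemma
  have hcancel : ∀ (A : Matrix (Fin n) (Fin n) ℝ), IsUnit A.det →
      ∀ (C : Matrix (Fin n) (Fin q) ℝ), A * (A⁻¹ * C * Cᵀ * (A⁻¹)ᵀ) * Aᵀ = C * Cᵀ := by
    intro A hA C
    have e1 : A * A⁻¹ = 1 := Matrix.mul_nonsing_inv A hA
    have e2 : (A⁻¹)ᵀ * Aᵀ = 1 := by rw [← Matrix.transpose_mul, e1, Matrix.transpose_one]
    calc A * (A⁻¹ * C * Cᵀ * (A⁻¹)ᵀ) * Aᵀ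
        = A * (A⁻¹ * (C * (Cᵀ * ((A⁻¹)ᵀ * Aᵀ)))) := by simp only [Matrix.mul_assoc]
      _ = A * (A⁻¹ * (C * Cᵀ)) := by rw [e2, Matrix.mul_one]
      _ = (A * A⁻¹) * (C * Cᵀ) := by rw [Matrix.mul_assoc]
      _ = C * Cᵀ := by rw [e1, Matrix.one_mul]
  have hzero1 : A₁ * Sig * A₁ᵀ - B₁ * B₁ᵀ = 0 := by
    have h := hcancel A₁ hunit B₁
    rw [hcov] at h
    rw [h]; exact sub_self _
  have hzero0 : A₀ * Sig * A₀ᵀ - B * Bᵀ = 0 := by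
    have h := hcancel A₀ hA₀ B
    rw [← hSig] at h
    rw [h]; exact sub_self _
  have hGp : G (A₁, B₁) = G p₀ := by
    have e1 : bL (A₁, B₁) (A₁, B₁) = bL p₀ p₀ := by
      rw [hbLapp, hbLapp]
      simp only [hp₀]
      rw [hzero1, hzero0]
    have e2 : Rc (A₁, B₁) = Rc p₀ := by rw [hRcapp, hRcapp, hres]
    simp only [hGdef, e1, e2]
  have hmem0 : p₀ ∈ Φ.source := HasStrictFDerivAt.mem_toOpenPartialHomeomorph_source hGder'
  exact Φ.injOn hpU hmem0 (congrArg (⇑Pc) hGp)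

end Aux

/-- Local identifiability of the noise parameters `(A₀, B)` in the
AB-model: if the joint Jacobian map is injective, then `(A₀, B)` is locally the
unique pair with innovation covariance `Σ` satisfying the restrictions. -/
theorem stmt_4 (n q r : ℕ) (hn : 0 < n) (hq : 0 < q) (hr : 0 < r) (hqn : q < n)
    (A₀ : Matrix (Fin n) (Fin n) ℝ) (hA₀ : IsUnit A₀.det)
    (B : Matrix (Fin n) (Fin q) ℝ) (hB : B.rank = q)
    (Sig : Matrix (Fin n) (Fin n) ℝ) (hSig : Sig = A₀⁻¹ * B * Bᵀ * (A₀⁻¹)ᵀ)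
    (R : (Matrix (Fin n) (Fin n) ℝ × Matrix (Fin n) (Fin q) ℝ) →ₗ[ℝ] (Fin r → ℝ))
    (J : (Matrix (Fin n) (Fin n) ℝ × Matrix (Fin n) (Fin q) ℝ) →ₗ[ℝ]
      (Matrix (Fin n) (Fin n) ℝ × (Fin r → ℝ)))
    (hJ : ∀ H K, J (H, K) =
      (-(A₀⁻¹ * H * Sig) - Sig * Hᵀ * (A₀⁻¹)ᵀ + A₀⁻¹ * (K * Bᵀ + B * Kᵀ) * (A₀⁻¹)ᵀ,
        R (H, K)))
    (hinj : Function.Injective J) :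
    ∃ U ∈ nhds (A₀, B),
      ∀ p ∈ U, IsUnit (Prod.fst p).det →
        (Prod.fst p)⁻¹ * (Prod.snd p) * (Prod.snd p)ᵀ * ((Prod.fst p)⁻¹)ᵀ = Sig →
        R p = R (A₀, B) → p = (A₀, B) := by
  exact stmt_4_aux n q r A₀ hA₀ B Sig hSig R J hJ hinj
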